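/- For every integer k ≥ 1, let P_k = {x ∈ ℝ² : x₁ ≥ 0, x₂ ≥ 0, x₂ ≤ k, x₁ − (1/k)x₂ ≤ 1} and let Q_k = conv(P_k ∪ {(1/2, −k/2)}). Then P_k is an integral polytope, Q_k is a relaxation of P_k, and the CG rank of Q_k satisfies r(Q_k) ≥ k/2. Consequently r*(P_k) ≥ k/2, so any upper bound on the reverse CG rank of integral polytopes that are not relatively lattice-free must grow with the number of integer points in their interior. -/

import Mathlib

open Set Pointwise

/-- Dot product of an integer vector with a real vector. -/
def zdot {n : ℕ} (c : Fin n → ℤ) (x : Fin n → ℝ) : ℝ := ∑ i, (c i : ℝ) * x i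

/-- Dot product of two real vectors. -/
def rdot {n : ℕ} (c x : Fin n → ℝ) : ℝ := ∑ i, c i * x i

/-- The integer points of `ℝ^n`. -/
def latticePts (n : ℕ) : Set (Fin n → ℝ) := {x | ∀ i, ∃ z : ℤ, x i = (z : ℝ)}

/-- A polyhedron: finite intersection of halfspaces. -/
def IsPolyhedron {n : ℕ} (Q : Set (Fin n → ℝ)) : Prop :=
  ∃ (m : ℕ) (A : Fin m → Fin n → ℝ) (b : Fin m → ℝ), Q = {x | ∀ i, rdot (A i) x ≤ b i}

/-- A rational polyhedron: the data `A`, `b` can be chosen rational. -/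
def IsRatPolyhedron {n : ℕ} (Q : Set (Fin n → ℝ)) : Prop :=
  ∃ (m : ℕ) (A : Fin m → Fin n → ℚ) (b : Fin m → ℚ),
    Q = {x | ∀ i, ∑ j, (A i j : ℝ) * x j ≤ (b i : ℝ)}

/-- The integer hull of a set: the convex hull of its integer points. -/
def intHull {n : ℕ} (Q : Set (Fin n → ℝ)) : Set (Fin n → ℝ) := convexHull ℝ (Q ∩ latticePts n)

/-- An integral polyhedron: a polyhedron equal to the convex hull of its integer points. -/
def IsIntegralPolyhedron {n : ℕ} (P : Set (Fin n → ℝ)) : Prop :=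
  IsPolyhedron P ∧ P = intHull P

/-- The Chvátal–Gomory closure of a set. -/
def cgClosure {n : ℕ} (Q : Set (Fin n → ℝ)) : Set (Fin n → ℝ) :=
  {x ∈ Q | ∀ (c : Fin n → ℤ) (δ : ℝ), (∀ y ∈ Q, zdot c y ≤ δ) → zdot c x ≤ (⌊δ⌋ : ℝ)}

/-- The `p`-th iterated CG closure. -/
def cgIter {n : ℕ} (p : ℕ) (Q : Set (Fin n → ℝ)) : Set (Fin n → ℝ) := cgClosure^[p] Q

/-- The CG rank: the least `p` with `Q^(p) = Q_I`, as an extended natural number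
(`⊤` if no such `p` exists). -/
noncomputable def cgRank {n : ℕ} (Q : Set (Fin n → ℝ)) : ℕ∞ :=
  sInf {p : ℕ∞ | ∃ m : ℕ, p = (m : ℕ∞) ∧ cgIter m Q = intHull Q}

/-- A relaxation of an integral polyhedron `P`: a rational polyhedron with the
same integer points. -/
def IsRelaxation {n : ℕ} (P Q : Set (Fin n → ℝ)) : Prop :=
  IsRatPolyhedron Q ∧ Q ∩ latticePts n = P ∩ latticePts n

/-- `r*(P) = +∞`: for every `p` some relaxation of `P` has CG rank larger than `p`. -/
def RStarInfinite {n : ℕ} (P : Set (Fin n → ℝ)) : Prop :=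
  ∀ p : ℕ, ∃ Q : Set (Fin n → ℝ), IsRelaxation P Q ∧ (p : ℕ∞) < cgRank Q

/-- The recession cone of a convex set. -/
def recCone {n : ℕ} (P : Set (Fin n → ℝ)) : Set (Fin n → ℝ) :=
  {v | ∀ x ∈ P, ∀ α : ℝ, 0 ≤ α → x + α • v ∈ P}

/-- The linear span `⟨v⟩` of a single vector, as a set. -/
def spanLine {n : ℕ} (v : Fin n → ℝ) : Set (Fin n → ℝ) := {w | ∃ t : ℝ, w = t • v}

/-- A set is relatively lattice-free if its relative interior contains no integer point. -/
def RelLatticeFree {n : ℕ} (C : Set (Fin n → ℝ)) : Prop :=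
  intrinsicInterior ℝ C ∩ latticePts n = ∅

/-- A set is lattice-free if its interior contains no integer point. -/
def LatticeFree {n : ℕ} (C : Set (Fin n → ℝ)) : Prop :=
  interior C ∩ latticePts n = ∅

/-- The polytope `P_k = {x ∈ ℝ² : x₁ ≥ 0, x₂ ≥ 0, x₂ ≤ k, x₁ - (1/k)x₂ ≤ 1}`. -/
def Pk (k : ℕ) : Set (Fin 2 → ℝ) :=
  {x | 0 ≤ x 0 ∧ 0 ≤ x 1 ∧ x 1 ≤ (k : ℝ) ∧ x 0 - (1 / (k : ℝ)) * x 1 ≤ 1}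

/-- The relaxation `Q_k = conv(P_k ∪ {(1/2, -k/2)})`. -/
def Qk (k : ℕ) : Set (Fin 2 → ℝ) :=
  convexHull ℝ (Pk k ∪ {![1 / 2, -(k : ℝ) / 2]})

lemma zdot_two (c : Fin 2 → ℤ) (x : Fin 2 → ℝ) : zdot c x = c 0 * x 0 + c 1 * x 1 := by
  simp [zdot, Fin.sum_univ_two]

lemma pair_mem_lattice (a b : ℤ) : ![(a:ℝ), (b:ℝ)] ∈ latticePts 2 := by
  intro i
  fin_cases i
  · exact ⟨a, rfl⟩
  · exact ⟨b, rfl⟩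

/-- The H-description of Qk. -/
def Rk (k : ℕ) : Set (Fin 2 → ℝ) :=
  {x | 0 ≤ x 0 ∧ x 1 ≤ (k:ℝ) ∧ -(k:ℝ) * x 0 - x 1 ≤ 0 ∧ (k:ℝ) * x 0 - x 1 ≤ (k:ℝ)}

lemma Rk_convex (k : ℕ) : Convex ℝ (Rk k) := by
  intro x hx y hy a b ha hb hab
  obtain ⟨h1, h2, h3, h4⟩ := hx
  obtain ⟨g1, g2, g3, g4⟩ := hy
  have e0 : (a • x + b • y) 0 = a * x 0 + b * y 0 := rfl
  have e1 : (a • x + b • y) 1 = a * x 1 + b * y 1 := rfl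
  refine ⟨?_, ?_, ?_, ?_⟩ <;> simp only [e0, e1] <;> nlinarith

lemma Pk_subset_Rk (k : ℕ) (hk : 1 ≤ k) : Pk k ⊆ Rk k := by
  intro x hx
  obtain ⟨h1, h2, h3, h4⟩ := hx
  have hk0 : (0:ℝ) < k := by exact_mod_cast hk
  have h4' : (k:ℝ) * (x 0 - (1 / (k:ℝ)) * x 1) ≤ (k:ℝ) * 1 := by
    exact mul_le_mul_of_nonneg_left h4 (le_of_lt hk0)
  have : (k:ℝ) * ((1 / (k:ℝ)) * x 1) = x 1 := by
    field_simp
  refine ⟨h1, h3, by nlinarith, by nlinarith [mul_sub (k:ℝ) (x 0) ((1 / (k:ℝ)) * x 1)]⟩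

lemma tip_mem_Rk (k : ℕ) (hk : 1 ≤ k) : ![1 / 2, -(k : ℝ) / 2] ∈ Rk k := by
  have hk0 : (0:ℝ) < k := by exact_mod_cast hk
  refine ⟨?_, ?_, ?_, ?_⟩ <;> simp [Rk] <;> nlinarith

lemma Qk_subset_Rk (k : ℕ) (hk : 1 ≤ k) : Qk k ⊆ Rk k := by
  apply convexHull_min _ (Rk_convex k)
  rintro x (hx | hx)
  · exact Pk_subset_Rk k hk hx
  · rw [Set.mem_singleton_iff] at hx
    subst hx
    exact tip_mem_Rk k hk

lemma Rk_subset_Qk (k : ℕ) (hk : 1 ≤ k) : Rk k ⊆ Qk k := by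
  intro x hx
  obtain ⟨h1, h2, h3, h4⟩ := hx
  have hk0 : (0:ℝ) < k := by exact_mod_cast hk
  have htip : (![1 / 2, -(k : ℝ) / 2] : Fin 2 → ℝ) ∈ Qk k :=
    subset_convexHull ℝ _ (Or.inr rfl)
  have hPQ : Pk k ⊆ Qk k := fun y hy => subset_convexHull ℝ _ (Or.inl hy)
  by_cases hx1 : 0 ≤ x 1
  · -- x ∈ Pk
    apply hPQ
    refine ⟨h1, hx1, h2, ?_⟩
    have : (k:ℝ) * x 0 ≤ k + x 1 := by linarith
    rw [div_mul_eq_mul_div, sub_le_iff_le_add, ← sub_le_iff_le_add', le_div_iff₀ hk0]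
    nlinarith
  · push_neg at hx1
    -- x = (1-μ) • p + μ • tip with μ = -2 x₁ / k, p = ((x₀ - μ/2)/(1-μ), 0)
    have hlb : -(k:ℝ)/2 ≤ x 1 := by linarith
    by_cases heq : x 1 = -(k:ℝ)/2
    · have hx0 : x 0 = 1/2 := by nlinarith [h3, h4]
      have : x = ![1 / 2, -(k : ℝ) / 2] := by
        funext i; fin_cases i
        · simpa using hx0
        · simpa using heq
      rw [this]; exact htip
    · have hmu1 : -2 * x 1 / k < 1 := by
        rw [div_lt_one hk0]
        rcases lt_or_eq_of_le hlb with h | h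
        · linarith
        · exact absurd h.symm heq
      set μ : ℝ := -2 * x 1 / k with hμdef
      have hμ0 : 0 ≤ μ := by
        apply div_nonneg _ (le_of_lt hk0); linarith
      have hμk : μ * k = -2 * x 1 := by
        rw [hμdef]; field_simp
      set p : Fin 2 → ℝ := ![(x 0 - μ/2)/(1-μ), 0] with hpdef
      have h1μ : 0 < 1 - μ := by linarith
      have hp : p ∈ Pk k := by
        refine ⟨?_, le_refl 0, by positivity, ?_⟩
        · apply div_nonneg _ (le_of_lt h1μ)
          nlinarith
        · simp only [hpdef, Matrix.cons_val_zero, Matrix.cons_val_one, Matrix.head_cons]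
          rw [mul_zero, sub_zero, div_le_one h1μ]
          nlinarith
      have hcomb : x = (1 - μ) • p + μ • ![1 / 2, -(k : ℝ) / 2] := by
        funext i; fin_cases i
        · show x 0 = (1-μ) * ((x 0 - μ/2)/(1-μ)) + μ * (1/2)
          rw [mul_div_cancel₀ _ (ne_of_gt h1μ)]
          ring
        · show x 1 = (1-μ) * 0 + μ * (-(k:ℝ)/2)
          rw [mul_zero, zero_add]
          nlinarith
      rw [hcomb]
      exact (convex_convexHull ℝ _) (hPQ hp) htip (le_of_lt h1μ) hμ0 (by ring)

lemma Qk_eq_Rk (k : ℕ) (hk : 1 ≤ k) : Qk k = Rk k :=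
  Set.Subset.antisymm (Qk_subset_Rk k hk) (Rk_subset_Qk k hk)

lemma Qk_ratPolyhedron (k : ℕ) (hk : 1 ≤ k) : IsRatPolyhedron (Qk k) := by
  refine ⟨4, ![![-1, 0], ![0, 1], ![-(k:ℚ), -1], ![(k:ℚ), -1]], ![0, (k:ℚ), 0, (k:ℚ)], ?_⟩
  rw [Qk_eq_Rk k hk]
  ext x
  constructor
  · rintro ⟨h1, h2, h3, h4⟩ i
    fin_cases i <;> simp [Fin.sum_univ_two] <;> linarith
  · intro h
    have h1 := h 0
    have h2 := h 1
    have h3 := h 2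
    have h4 := h 3
    simp [Fin.sum_univ_two] at h1 h2 h3 h4
    refine ⟨by linarith, by linarith, by linarith, by linarith⟩

lemma lattice_eq (k : ℕ) (hk : 1 ≤ k) : Qk k ∩ latticePts 2 = Pk k ∩ latticePts 2 := by
  have hk0 : (0:ℝ) < k := by exact_mod_cast hk
  apply Set.Subset.antisymm
  · rintro x ⟨hxQ, hxl⟩
    refine ⟨?_, hxl⟩
    have hxR := Qk_subset_Rk k hk hxQ
    obtain ⟨h1, h2, h3, h4⟩ := hxR
    have hx1 : 0 ≤ x 1 := by
      by_contra hneg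
      push_neg at hneg
      obtain ⟨z, hz⟩ := hxl 1
      obtain ⟨w, hw⟩ := hxl 0
      have hz1 : z ≤ -1 := by
        by_contra hz1
        push_neg at hz1
        have : (0:ℤ) ≤ z := by omega
        have : (0:ℝ) ≤ z := by exact_mod_cast this
        rw [← hz] at this; linarith
      have hz1' : x 1 ≤ -1 := by rw [hz]; exact_mod_cast hz1
      -- 0 < x 0 < 1 yet x 0 integer
      have hw0 : 0 < x 0 := by nlinarith
      have hw1 : x 0 < 1 := by nlinarith
      rw [hw] at hw0 hw1
      have : 0 < w := by exact_mod_cast hw0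
      have : w < 1 := by exact_mod_cast hw1
      omega
    refine ⟨h1, hx1, h2, ?_⟩
    rw [div_mul_eq_mul_div, sub_le_iff_le_add, ← sub_le_iff_le_add', le_div_iff₀ hk0]
    nlinarith
  · rintro x ⟨hxP, hxl⟩
    exact ⟨subset_convexHull ℝ _ (Or.inl hxP), hxl⟩

lemma Pk_bounded (k : ℕ) (hk : 1 ≤ k) : Bornology.IsBounded (Pk k) := by
  have hk0 : (0:ℝ) < k := by exact_mod_cast hk
  apply (isCompact_Icc (a := fun _ : Fin 2 => (-1:ℝ)) (b := fun _ => (k:ℝ) + 2)).isBounded.subset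
  rintro x ⟨h1, h2, h3, h4⟩
  have hx0 : x 0 ≤ 2 := by
    have : (1 / (k:ℝ)) * x 1 ≤ 1 := by
      rw [div_mul_eq_mul_div, one_mul, div_le_one hk0]; exact h3
    linarith
  constructor <;> intro i <;> fin_cases i <;> simp <;> linarith

lemma Pk_integral (k : ℕ) (hk : 1 ≤ k) : IsIntegralPolyhedron (Pk k) := by
  have hk0 : (0:ℝ) < k := by exact_mod_cast hk
  constructor
  · refine ⟨4, ![![-1, 0], ![0, -1], ![0, 1], ![1, -(1/(k:ℝ))]], ![0, 0, (k:ℝ), 1], ?_⟩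
    ext x
    constructor
    · rintro ⟨h1, h2, h3, h4⟩ i
      fin_cases i <;> simp [rdot, Fin.sum_univ_two, ← one_div] <;> linarith
    · intro h
      have h1 := h 0
      have h2 := h 1
      have h3 := h 2
      have h4 := h 3
      simp [rdot, Fin.sum_univ_two, ← one_div] at h1 h2 h3 h4
      refine ⟨by linarith, by linarith, by linarith, by linarith⟩
  · apply Set.Subset.antisymm
    · -- Pk ⊆ convexHull (Pk ∩ lattice)
      intro x hx
      obtain ⟨h1, h2, h3, h4⟩ := hx
      set C := convexHull ℝ (Pk k ∩ latticePts 2) with hC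
      have hconv : Convex ℝ C := convex_convexHull ℝ _
      have hmem : ∀ a b : ℤ, (![(a:ℝ),(b:ℝ)] : Fin 2 → ℝ) ∈ Pk k → ![(a:ℝ),(b:ℝ)] ∈ C :=
        fun a b h => subset_convexHull ℝ _ ⟨h, pair_mem_lattice a b⟩
      have v1 : (![(0:ℝ),(0:ℝ)] : Fin 2 → ℝ) ∈ C := by
        have := hmem 0 0 ⟨by norm_num, by norm_num, by simp, by norm_num⟩
        simpa using this
      have v2 : (![(0:ℝ),(k:ℝ)] : Fin 2 → ℝ) ∈ C := by
        have := hmem 0 (k:ℤ) ⟨by norm_num, by simp, by simp, by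
          simp only [Matrix.cons_val_zero, Matrix.cons_val_one, Matrix.head_cons]
          push_cast
          rw [div_mul_eq_mul_div, one_mul, div_self (ne_of_gt hk0)]
          norm_num⟩
        simpa using this
      have v3 : (![(1:ℝ),(0:ℝ)] : Fin 2 → ℝ) ∈ C := by
        have := hmem 1 0 ⟨by norm_num, by norm_num, by simp, by norm_num⟩
        simpa using this
      have v4 : (![(2:ℝ),(k:ℝ)] : Fin 2 → ℝ) ∈ C := by
        have := hmem 2 (k:ℤ) ⟨by norm_num, by simp, by simp, by
          simp only [Matrix.cons_val_zero, Matrix.cons_val_one, Matrix.head_cons]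
          push_cast
          rw [div_mul_eq_mul_div, one_mul, div_self (ne_of_gt hk0)]
          norm_num⟩
        simpa using this
      set t : ℝ := x 1 / k with ht
      have ht0 : 0 ≤ t := div_nonneg h2 (le_of_lt hk0)
      have ht1 : t ≤ 1 := by rw [ht, div_le_one hk0]; exact h3
      have htk : t * k = x 1 := by rw [ht]; field_simp
      have h1t : (0:ℝ) < 1 + t := by linarith
      set lam : ℝ := x 0 / (1 + t) with hlam
      have hlam0 : 0 ≤ lam := div_nonneg h1 (le_of_lt h1t)
      have hlam1 : lam ≤ 1 := by
        rw [hlam, div_le_one h1t]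
        have : (1 / (k:ℝ)) * x 1 = t := by rw [ht]; field_simp
        linarith
      have hlamx : lam * (1 + t) = x 0 := by rw [hlam]; field_simp
      have hp : (1 - t) • ![(0:ℝ),(0:ℝ)] + t • ![(0:ℝ),(k:ℝ)] ∈ C :=
        hconv v1 v2 (by linarith) ht0 (by ring)
      have hq : (1 - t) • ![(1:ℝ),(0:ℝ)] + t • ![(2:ℝ),(k:ℝ)] ∈ C :=
        hconv v3 v4 (by linarith) ht0 (by ring)
      have hcomb : x = (1 - lam) • ((1 - t) • ![(0:ℝ),(0:ℝ)] + t • ![(0:ℝ),(k:ℝ)])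
          + lam • ((1 - t) • ![(1:ℝ),(0:ℝ)] + t • ![(2:ℝ),(k:ℝ)]) := by
        funext i; fin_cases i
        · show x 0 = (1-lam) * ((1-t)*0 + t*0) + lam * ((1-t)*1 + t*2)
          nlinarith [hlamx]
        · show x 1 = (1-lam) * ((1-t)*0 + t*k) + lam * ((1-t)*0 + t*k)
          nlinarith [htk]
      rw [hcomb]
      exact hconv hp hq (by linarith) hlam0 (by ring)
    · -- conv(Pk ∩ lattice) ⊆ Pk
      apply convexHull_min (fun y hy => hy.1)
      intro x hx y hy a b ha hb hab
      obtain ⟨p1, p2, p3, p4⟩ := hx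
      obtain ⟨q1, q2, q3, q4⟩ := hy
      have e0 : (a • x + b • y) 0 = a * x 0 + b * y 0 := rfl
      have e1 : (a • x + b • y) 1 = a * x 1 + b * y 1 := rfl
      refine ⟨?_, ?_, ?_, ?_⟩ <;> simp only [e0, e1] <;> nlinarith

lemma int_persist {n : ℕ} (Q : Set (Fin n → ℝ)) (x : Fin n → ℝ)
    (hx : x ∈ Q) (hlat : x ∈ latticePts n) : ∀ p, x ∈ cgIter p Q := by
  intro p
  induction p with
  | zero => exact hx
  | succ p ih =>
    rw [cgIter, Function.iterate_succ_apply']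
    refine ⟨ih, fun c δ hvalid => ?_⟩
    have hz : ∃ z : ℤ, zdot c x = (z:ℝ) := by
      choose f hf using hlat
      refine ⟨∑ i, c i * f i, ?_⟩
      rw [zdot]
      push_cast
      exact Finset.sum_congr rfl fun i _ => by rw [hf i]
    obtain ⟨z, hz⟩ := hz
    rw [hz]
    exact_mod_cast Int.le_floor.mpr (by rw [← hz] at *; exact_mod_cast hvalid x ih)

lemma seg_mem (k : ℕ) (hk : 1 ≤ k) :
    ∀ p : ℕ, ∀ s : ℝ, -(k:ℝ)/2 + p ≤ s → s ≤ k → (![1/2, s] : Fin 2 → ℝ) ∈ cgIter p (Qk k) := by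
  have hk0 : (0:ℝ) < k := by exact_mod_cast hk
  have h0k : (![(0:ℝ), (k:ℝ)] : Fin 2 → ℝ) ∈ Qk k := by
    refine subset_convexHull ℝ _ (Or.inl ⟨by norm_num, by simp, by simp, by
      simp only [Matrix.cons_val_zero, Matrix.cons_val_one, Matrix.head_cons]
      rw [div_mul_eq_mul_div, one_mul, div_self (ne_of_gt hk0)]
      norm_num⟩)
  have h1k : (![(1:ℝ), (k:ℝ)] : Fin 2 → ℝ) ∈ Qk k := by
    refine subset_convexHull ℝ _ (Or.inl ⟨by norm_num, by simp, by simp, by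
      simp only [Matrix.cons_val_zero, Matrix.cons_val_one, Matrix.head_cons]
      rw [div_mul_eq_mul_div, one_mul, div_self (ne_of_gt hk0)]
      norm_num⟩)
  have l0k : (![(0:ℝ), (k:ℝ)] : Fin 2 → ℝ) ∈ latticePts 2 := by
    have := pair_mem_lattice 0 (k:ℤ); simpa using this
  have l1k : (![(1:ℝ), (k:ℝ)] : Fin 2 → ℝ) ∈ latticePts 2 := by
    have := pair_mem_lattice 1 (k:ℤ); simpa using this
  intro p
  induction p with
  | zero =>
    intro s hs1 hs2
    -- convex combination of tip and (1/2, k)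
    have htip : (![1 / 2, -(k : ℝ) / 2] : Fin 2 → ℝ) ∈ Qk k :=
      subset_convexHull ℝ _ (Or.inr rfl)
    have htop : (![1 / 2, (k : ℝ)] : Fin 2 → ℝ) ∈ Qk k := by
      refine subset_convexHull ℝ _ (Or.inl ⟨by norm_num, by simp, by simp, by
        simp only [Matrix.cons_val_zero, Matrix.cons_val_one, Matrix.head_cons]
        rw [div_mul_eq_mul_div, one_mul, div_self (ne_of_gt hk0)]
        norm_num⟩)
    set μ : ℝ := (s + (k:ℝ)/2) / ((3/2) * k) with hμ
    have hd : (0:ℝ) < (3/2) * k := by positivity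
    have hμ0 : 0 ≤ μ := by
      apply div_nonneg _ (le_of_lt hd)
      simp only [Nat.cast_zero, add_zero] at hs1
      linarith
    have hμ1 : μ ≤ 1 := by
      rw [hμ, div_le_one hd]; linarith
    have hμk : μ * ((3/2) * k) = s + (k:ℝ)/2 := by
      rw [hμ]; field_simp
    have hcomb : (![1/2, s] : Fin 2 → ℝ) = (1 - μ) • ![1 / 2, -(k : ℝ) / 2] + μ • ![1 / 2, (k:ℝ)] := by
      funext i; fin_cases i
      · show (1:ℝ)/2 = (1-μ) * (1/2) + μ * (1/2); ring
      · show s = (1-μ) * (-(k:ℝ)/2) + μ * k; nlinarith [hμk]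
    rw [show cgIter 0 (Qk k) = Qk k from rfl, hcomb]
    exact (convex_convexHull ℝ _) htip htop (by linarith) hμ0 (by ring)
  | succ p ih =>
    intro s hs1 hs2
    have hs1' : -(k:ℝ)/2 + p ≤ s := by push_cast at hs1 ⊢; linarith
    have hmem : (![1/2, s] : Fin 2 → ℝ) ∈ cgIter p (Qk k) := ih s hs1' hs2
    have hmem' : (![1/2, s - 1] : Fin 2 → ℝ) ∈ cgIter p (Qk k) := by
      apply ih
      · push_cast at hs1 ⊢; linarith
      · linarith
    rw [cgIter, Function.iterate_succ_apply']
    refine ⟨hmem, fun c δ hvalid => ?_⟩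
    have hv0 := hvalid _ (int_persist (Qk k) _ h0k l0k p)
    have hv1 := hvalid _ (int_persist (Qk k) _ h1k l1k p)
    have hvs := hvalid _ hmem'
    rw [zdot_two] at hv0 hv1 hvs ⊢
    simp only [Matrix.cons_val_zero, Matrix.cons_val_one, Matrix.head_cons] at hv0 hv1 hvs ⊢
    rcases le_or_gt 0 (c 1) with hc | hc
    · -- use integer points (0,k), (1,k)
      have i0 : ((c 1 * (k:ℤ) : ℤ) : ℝ) ≤ ⌊δ⌋ := by
        apply Int.cast_le.mpr
        apply Int.le_floor.mpr
        push_cast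
        linarith
      have i1 : ((c 0 + c 1 * (k:ℤ) : ℤ) : ℝ) ≤ ⌊δ⌋ := by
        apply Int.cast_le.mpr
        apply Int.le_floor.mpr
        push_cast
        linarith
      push_cast at i0 i1
      have hcc : (0:ℝ) ≤ c 1 := by exact_mod_cast hc
      nlinarith [mul_nonneg hcc (sub_nonneg.mpr hs2)]
    · -- c 1 ≤ -1
      have hcc : (c 1 : ℝ) ≤ -1 := by
        have : c 1 ≤ -1 := by omega
        exact_mod_cast this
      have hfl : δ - 1 < ⌊δ⌋ := Int.sub_one_lt_floor δ
      nlinarith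

lemma rank_lb (k : ℕ) (hk : 1 ≤ k) (m : ℕ) (hm : cgIter m (Qk k) = intHull (Qk k)) :
    k ≤ 2 * m := by
  have hk0 : (0:ℝ) < k := by exact_mod_cast hk
  by_contra hcon
  push_neg at hcon
  have hs1 : -(k:ℝ)/2 + m ≤ -(k:ℝ)/2 + m := le_refl _
  have hs2 : -(k:ℝ)/2 + m ≤ k := by
    have : (m:ℝ) < k := by
      have : (2*m:ℝ) < k := by exact_mod_cast hcon
      linarith [hk0]
    linarith
  have hpt := seg_mem k hk m _ hs1 hs2
  rw [hm] at hpt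
  have hsub : intHull (Qk k) ⊆ {x : Fin 2 → ℝ | 0 ≤ x 1} := by
    apply convexHull_min
    · rw [lattice_eq k hk]
      rintro y ⟨hy, -⟩
      exact hy.2.1
    · intro x hx y hy a b ha hb hab
      have : (a • x + b • y) 1 = a * x 1 + b * y 1 := rfl
      rw [Set.mem_setOf_eq, this]
      have hx' : (0:ℝ) ≤ x 1 := hx
      have hy' : (0:ℝ) ≤ y 1 := hy
      nlinarith [mul_nonneg ha hx', mul_nonneg hb hy']
  have := hsub hpt
  rw [Set.mem_setOf_eq] at this
  simp only [Matrix.cons_val_one, Matrix.head_cons, Matrix.cons_val_zero] at this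
  have : (2*m:ℝ) < k := by exact_mod_cast hcon
  linarith

theorem stmt_10 (k : ℕ) (hk : 1 ≤ k) :
    (IsIntegralPolyhedron (Pk k) ∧ Bornology.IsBounded (Pk k)) ∧
    IsRelaxation (Pk k) (Qk k) ∧
    (k : ℕ∞) ≤ 2 * cgRank (Qk k) := by
  refine ⟨⟨Pk_integral k hk, Pk_bounded k hk⟩, ⟨Qk_ratPolyhedron k hk, lattice_eq k hk⟩, ?_⟩
  have hlow : (((k+1)/2 : ℕ) : ℕ∞) ≤ cgRank (Qk k) := by
    apply le_sInf
    rintro p ⟨m, rfl, hm⟩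
    have := rank_lb k hk m hm
    exact Nat.cast_le.mpr (by omega)
  calc (k : ℕ∞) ≤ ((2 * ((k+1)/2) : ℕ) : ℕ∞) := Nat.cast_le.mpr (by omega)
    _ = 2 * (((k+1)/2 : ℕ) : ℕ∞) := by push_cast; ring
    _ ≤ 2 * cgRank (Qk k) := mul_le_mul_right hlow 2
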